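/- arXiv:2105.12871 — 6 statements merged into one kernel-verified Lean document; each statement's English description precedes it below -/
import Mathlib

section
/- For every q-ary code C of length n, the average Hamming distance is bounded above as D(C) ≤ n·(1 − 1/q). -/
open Finset

/-- For every `q`-ary code `C` of length `n`, the average Hamming
distance is bounded above as `D(C) ≤ n · (1 - 1/q)`. -/
theorem avg_hamming_dist_le (q n : ℕ) (hq : 2 ≤ q) (hn : 1 ≤ n)
    (C : Finset (Fin n → Fin q)) (hC : C.Nonempty) :
    (1 / (C.card : ℝ) ^ 2) * ∑ x ∈ C, ∑ y ∈ C, (hammingDist x y : ℝ) ≤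
      (n : ℝ) * (1 - 1 / (q : ℝ)) := by
  set M : ℝ := (C.card : ℝ) with hM
  have hMpos : 0 < M := by
    rw [hM]; exact_mod_cast Finset.card_pos.mpr hC
  have hqpos : (0:ℝ) < q := by positivity
  -- fiber counts
  set m : Fin n → Fin q → ℝ := fun i a => ((C.filter (fun x => x i = a)).card : ℝ) with hm
  have hsum_m : ∀ i : Fin n, ∑ a : Fin q, m i a = M := by
    intro i
    have : ∑ a : Fin q, ∑ x ∈ C.filter (fun x => x i = a), (1:ℝ) = ∑ x ∈ C, (1:ℝ) :=
      Finset.sum_fiberwise C (fun x => x i) (fun _ => (1:ℝ))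
    simpa [hm, hM, Finset.sum_const, mul_comm] using this
  -- rewrite hamming distance as a sum over coordinates
  have hdist : ∀ x y : Fin n → Fin q,
      (hammingDist x y : ℝ) = ∑ i : Fin n, (if x i = y i then (0:ℝ) else 1) := by
    intro x y
    rw [hammingDist, Finset.card_filter]
    push_cast
    refine Finset.sum_congr rfl fun i _ => ?_
    by_cases h : x i = y i <;> simp [h]
  -- key identity
  have key : ∑ x ∈ C, ∑ y ∈ C, (hammingDist x y : ℝ)
      = ∑ i : Fin n, (M^2 - ∑ a : Fin q, (m i a)^2) := by
    simp only [hdist]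
    rw [Finset.sum_congr rfl fun x (_ : x ∈ C) => (Finset.sum_comm (s := C)
      (t := Finset.univ) (f := fun y i => if x i = y i then (0:ℝ) else 1)),
      Finset.sum_comm]
    refine Finset.sum_congr rfl fun i _ => ?_
    have inner : ∀ x ∈ C, ∑ y ∈ C, (if x i = y i then (0:ℝ) else 1)
        = M - m i (x i) := by
      intro x hx
      have : ∑ y ∈ C, (if x i = y i then (0:ℝ) else 1)
          = ∑ y ∈ C, ((1:ℝ) - (if y i = x i then 1 else 0)) := by
        refine Finset.sum_congr rfl fun y _ => ?_
        by_cases h : x i = y i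
        · simp [h]
        · simp [h, Ne.symm h]
      rw [this, Finset.sum_sub_distrib, Finset.sum_boole]
      simp [hm, hM]
    rw [Finset.sum_congr rfl inner, Finset.sum_sub_distrib, Finset.sum_const,
      nsmul_eq_mul]
    have fib : ∑ x ∈ C, m i (x i) = ∑ a : Fin q, (m i a)^2 := by
      rw [← Finset.sum_fiberwise C (fun x => x i) (fun x => m i (x i))]
      refine Finset.sum_congr rfl fun a _ => ?_
      rw [Finset.sum_congr rfl (fun x hx => by
        rw [(Finset.mem_filter.mp hx).2]), Finset.sum_const, nsmul_eq_mul]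
      simp [hm, sq]
    rw [fib, sq, hM]
  rw [key]
  -- bound each coordinate term
  have bound : ∀ i : Fin n, M^2 - ∑ a : Fin q, (m i a)^2 ≤ M^2 * (1 - 1/q) := by
    intro i
    have cs : (∑ a : Fin q, m i a)^2 ≤ (Finset.univ : Finset (Fin q)).card *
        ∑ a : Fin q, (m i a)^2 := sq_sum_le_card_mul_sum_sq
    rw [hsum_m i] at cs
    simp only [Finset.card_univ, Fintype.card_fin] at cs
    have : M^2 / q ≤ ∑ a : Fin q, (m i a)^2 := by
      rw [div_le_iff₀ hqpos]; linarith [cs]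
    have h1 : M^2 * (1 - 1/q) = M^2 - M^2/q := by ring
    rw [h1]; linarith
  calc (1 / M ^ 2) * ∑ i : Fin n, (M^2 - ∑ a : Fin q, (m i a)^2)
      ≤ (1 / M ^ 2) * ∑ i : Fin n, M^2 * (1 - 1/q) := by
        apply mul_le_mul_of_nonneg_left (Finset.sum_le_sum fun i _ => bound i)
        positivity
    _ = (n : ℝ) * (1 - 1/q) := by
        rw [Finset.sum_const, Finset.card_univ, Fintype.card_fin, nsmul_eq_mul]
        field_simp
end

section
/- For a q-ary code C of length n with M = |C|, the average Hamming distance attains the upper bound, D(C) = n·(1 − 1/q), if and only if x_{i,j} = 1/q for every coordinate i ∈ {1,…,n} and every symbol j ∈ Fin q (i.e., every symbol appears exactly M/q times in every coordinate). -/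
/-- For a `q`-ary code `C` of length `n` with `M = |C|`, the average
Hamming distance attains the upper bound, `D(C) = n · (1 - 1/q)`, if and only if
`x_{i,j} = 1/q` for every coordinate `i` and every symbol `j ∈ Fin q`. -/
theorem avg_hamming_dist_eq_max_iff (q n : ℕ) (hq : 2 ≤ q) (hn : 1 ≤ n)
    (C : Finset (Fin n → Fin q)) (hC : C.Nonempty) :
    (1 / (C.card : ℝ) ^ 2) * ∑ x ∈ C, ∑ y ∈ C, (hammingDist x y : ℝ) =
        (n : ℝ) * (1 - 1 / (q : ℝ)) ↔
      ∀ (i : Fin n) (j : Fin q),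
        ((C.filter fun c => c i = j).card : ℝ) / (C.card : ℝ) = 1 / (q : ℝ) := by
  classical
  have hMpos : (0:ℝ) < (C.card : ℝ) := by exact_mod_cast hC.card_pos
  have hMne : (C.card : ℝ) ≠ 0 := ne_of_gt hMpos
  have hqpos : (0:ℝ) < (q:ℝ) := by
    have : 0 < q := lt_of_lt_of_le (by norm_num) hq
    exact_mod_cast this
  have hqne : (q:ℝ) ≠ 0 := ne_of_gt hqpos
  set M : ℝ := (C.card : ℝ) with hM
  set a : Fin n → Fin q → ℝ :=
    fun i j => ((C.filter fun c => c i = j).card : ℝ) / M with haDef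
  -- frequencies in each coordinate sum to 1
  have hsum : ∀ i : Fin n, ∑ j : Fin q, a i j = 1 := by
    intro i
    rw [haDef]
    simp only
    rw [← Finset.sum_div, div_eq_one_iff_eq hMne, hM]
    rw [← Nat.cast_sum]
    norm_cast
    exact (Finset.card_eq_sum_card_fiberwise
      (fun x _ => Finset.mem_univ (x i))).symm
  -- key combinatorial identity
  have key : ∑ x ∈ C, ∑ y ∈ C, (hammingDist x y : ℝ)
      = ∑ i : Fin n, (M ^ 2 -
          ∑ j : Fin q, ((C.filter fun c => c i = j).card : ℝ) ^ 2) := by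
    have h1 : ∀ x y : Fin n → Fin q,
        (hammingDist x y : ℝ) = ∑ i : Fin n, if x i = y i then 0 else 1 := by
      intro x y
      rw [hammingDist, Finset.card_filter]
      push_cast
      refine Finset.sum_congr rfl fun i _ => ?_
      by_cases h : x i = y i <;> simp [h]
    calc ∑ x ∈ C, ∑ y ∈ C, (hammingDist x y : ℝ)
        = ∑ x ∈ C, ∑ y ∈ C, ∑ i : Fin n, if x i = y i then (0:ℝ) else 1 := by
          refine Finset.sum_congr rfl fun x _ => Finset.sum_congr rfl fun y _ => h1 x y
      _ = ∑ i : Fin n, ∑ x ∈ C, ∑ y ∈ C, if x i = y i then (0:ℝ) else 1 := by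
          rw [Finset.sum_congr rfl fun x (_ : x ∈ C) => Finset.sum_comm]
          exact Finset.sum_comm
      _ = ∑ i : Fin n, (M ^ 2 -
            ∑ j : Fin q, ((C.filter fun c => c i = j).card : ℝ) ^ 2) := by
          refine Finset.sum_congr rfl fun i _ => ?_
          have hsplit : ∀ x y : Fin n → Fin q,
              (if x i = y i then (0:ℝ) else 1)
                = 1 - (if y i = x i then (1:ℝ) else 0) := by
            intro x y
            by_cases h : x i = y i
            · simp [h]
            · rw [if_neg h, if_neg (fun hh => h hh.symm)]; ring
          calc ∑ x ∈ C, ∑ y ∈ C, (if x i = y i then (0:ℝ) else 1)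
              = ∑ x ∈ C, ∑ y ∈ C, (1 - if y i = x i then (1:ℝ) else 0) := by
                exact Finset.sum_congr rfl fun x _ =>
                  Finset.sum_congr rfl fun y _ => hsplit x y
            _ = ∑ x ∈ C, (M - ((C.filter fun y => y i = x i).card : ℝ)) := by
                refine Finset.sum_congr rfl fun x _ => ?_
                rw [Finset.sum_sub_distrib, Finset.sum_const, Finset.sum_boole]
                simp [hM]
            _ = M ^ 2 - ∑ x ∈ C, ((C.filter fun y => y i = x i).card : ℝ) := by
                rw [Finset.sum_sub_distrib, Finset.sum_const]
                simp [hM]; ring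
            _ = M ^ 2 - ∑ j : Fin q,
                  ((C.filter fun c => c i = j).card : ℝ) ^ 2 := by
                congr 1
                rw [← Finset.sum_fiberwise_of_maps_to
                  (g := fun x : Fin n → Fin q => x i) (t := Finset.univ)
                  (fun x _ => Finset.mem_univ _)
                  (fun x => ((C.filter fun y => y i = x i).card : ℝ))]
                refine Finset.sum_congr rfl fun j _ => ?_
                calc ∑ x ∈ C.filter (fun c => c i = j),
                      ((C.filter fun y => y i = x i).card : ℝ)
                    = ∑ _x ∈ C.filter (fun c => c i = j),
                      ((C.filter fun c => c i = j).card : ℝ) := by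
                      refine Finset.sum_congr rfl fun x hx => ?_
                      rw [Finset.mem_filter] at hx
                      rw [hx.2]
                  _ = ((C.filter fun c => c i = j).card : ℝ) ^ 2 := by
                      rw [Finset.sum_const]
                      simp [sq]
  -- rewrite average distance
  have hD : (1 / M ^ 2) * ∑ x ∈ C, ∑ y ∈ C, (hammingDist x y : ℝ)
      = (n : ℝ) - ∑ i : Fin n, ∑ j : Fin q, (a i j) ^ 2 := by
    rw [key, Finset.mul_sum]
    have hterm : ∀ i : Fin n,
        1 / M ^ 2 * (M ^ 2 - ∑ j : Fin q, ((C.filter fun c => c i = j).card : ℝ) ^ 2)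
          = 1 - ∑ j : Fin q, (a i j) ^ 2 := by
      intro i
      rw [haDef]
      simp only [div_pow, ← Finset.sum_div]
      field_simp
    rw [Finset.sum_congr rfl fun i _ => hterm i, Finset.sum_sub_distrib,
      Finset.sum_const, Finset.card_univ, Fintype.card_fin]
    simp
  rw [hD]
  -- quadratic identity
  have hquad : ∀ i : Fin n,
      ∑ j : Fin q, (a i j - 1 / (q:ℝ)) ^ 2
        = (∑ j : Fin q, (a i j) ^ 2) - 1 / (q:ℝ) := by
    intro i
    have expand : ∀ j : Fin q, (a i j - 1 / (q:ℝ)) ^ 2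
        = (a i j) ^ 2 - 2 * (1/(q:ℝ)) * a i j + (1/(q:ℝ)) ^ 2 := fun j => by ring
    rw [Finset.sum_congr rfl fun j _ => expand j]
    rw [Finset.sum_add_distrib, Finset.sum_sub_distrib, ← Finset.mul_sum, hsum i,
      Finset.sum_const, Finset.card_univ, Fintype.card_fin]
    field_simp
    have hq1 : (q:ℝ) ^ 2 * ((q:ℝ)⁻¹) ^ 2 = 1 := by field_simp
    linear_combination hq1
  constructor
  · intro h
    have hX : ∑ i : Fin n, ∑ j : Fin q, (a i j) ^ 2 = (n:ℝ) * (1/(q:ℝ)) := by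
      have h' : (n:ℝ) - ∑ i : Fin n, ∑ j : Fin q, (a i j) ^ 2
          = (n:ℝ) - (n:ℝ) * (1/(q:ℝ)) := by rw [h]; ring
      linarith
    have hTzero : ∑ i : Fin n, ∑ j : Fin q, (a i j - 1/(q:ℝ)) ^ 2 = 0 := by
      rw [Finset.sum_congr rfl fun i _ => hquad i, Finset.sum_sub_distrib,
        Finset.sum_const, Finset.card_univ, Fintype.card_fin, hX]
      simp [mul_comm]
    intro i j
    have h1 := (Finset.sum_eq_zero_iff_of_nonneg
      (fun i _ => Finset.sum_nonneg fun j _ => sq_nonneg _)).mp hTzero i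
      (Finset.mem_univ i)
    have h2 := (Finset.sum_eq_zero_iff_of_nonneg
      (fun j _ => sq_nonneg _)).mp h1 j (Finset.mem_univ j)
    have h3 : a i j - 1/(q:ℝ) = 0 := by
      exact pow_eq_zero_iff (two_ne_zero) |>.mp h2
    have := sub_eq_zero.mp h3
    simpa [haDef] using this
  · intro h
    have ha : ∀ i j, a i j = 1/(q:ℝ) := fun i j => h i j
    have : ∑ i : Fin n, ∑ j : Fin q, (a i j) ^ 2 = (n:ℝ) * (1/(q:ℝ)) := by
      rw [Finset.sum_congr rfl fun i (_ : i ∈ Finset.univ) =>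
        Finset.sum_congr rfl fun j (_ : j ∈ Finset.univ) => by rw [ha i j]]
      rw [Finset.sum_const, Finset.sum_const, Finset.card_univ, Finset.card_univ,
        Fintype.card_fin, Fintype.card_fin]
      simp only [smul_eq_mul, nsmul_eq_mul]
      field_simp
    rw [this]
    ring
end

section
/- (Characterization of MAD codes) Let C be a q-ary code of length n whose size M = |C| is a multiple of q with M ≤ q^n. Then C is an (n, q, M)-MAD code (i.e., D(C) ≥ D(C') for every code C' ⊆ (Fin q)^n with |C'| = M) if and only if x_{i,j} = 1/q for every coordinate i ∈ {1,…,n} and every symbol j ∈ Fin q. -/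
open Finset

section aux

variable {q n : ℕ}

/-- Per-coordinate counting identity: the number of agreeing pairs equals the sum of
squared symbol counts. -/
lemma count_sq_sum (S : Finset (Fin n → Fin q)) (i : Fin n) :
    ∑ x ∈ S, ∑ y ∈ S, (if x i = y i then (1:ℝ) else 0) =
      ∑ j : Fin q, (((S.filter fun c => c i = j).card : ℝ))^2 := by
  classical
  have h1 : ∀ x ∈ S, (∑ y ∈ S, (if x i = y i then (1:ℝ) else 0)) =
      ((S.filter fun c => c i = x i).card : ℝ) := by
    intro x _
    rw [Finset.sum_boole]
    norm_cast
    congr 1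
    apply Finset.filter_congr
    intro y _
    exact eq_comm
  rw [Finset.sum_congr rfl h1]
  rw [← Finset.sum_fiberwise_of_maps_to (g := fun x => x i) (t := Finset.univ)
    (fun x _ => Finset.mem_univ (x i))]
  refine Finset.sum_congr rfl fun j _ => ?_
  have h2 : ∀ x ∈ S.filter (fun c => c i = j),
      ((S.filter fun c => c i = x i).card : ℝ) = ((S.filter fun c => c i = j).card : ℝ) := by
    intro x hx
    rw [Finset.mem_filter] at hx
    rw [hx.2]
  rw [Finset.sum_congr rfl h2, Finset.sum_const, nsmul_eq_mul, sq]

/-- The double sum of Hamming distances expressed via symbol counts. -/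
lemma double_sum_hamming (S : Finset (Fin n → Fin q)) :
    (∑ x ∈ S, ∑ y ∈ S, (hammingDist x y : ℝ)) =
      ∑ i : Fin n, ((S.card : ℝ)^2 - ∑ j : Fin q, ((S.filter fun c => c i = j).card : ℝ)^2) := by
  classical
  have hd : ∀ x y : Fin n → Fin q, (hammingDist x y : ℝ) =
      ∑ i : Fin n, ((1:ℝ) - if x i = y i then (1:ℝ) else 0) := by
    intro x y
    rw [hammingDist, Finset.card_filter]
    push_cast
    refine Finset.sum_congr rfl fun i _ => ?_
    by_cases h : x i = y i <;> simp [h]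
  have hswap : ∀ x ∈ S, (∑ y ∈ S, ∑ i : Fin n, ((1:ℝ) - if x i = y i then (1:ℝ) else 0)) =
      ∑ i : Fin n, ∑ y ∈ S, ((1:ℝ) - if x i = y i then (1:ℝ) else 0) :=
    fun x _ => Finset.sum_comm
  calc (∑ x ∈ S, ∑ y ∈ S, (hammingDist x y : ℝ))
      = ∑ x ∈ S, ∑ i : Fin n, ∑ y ∈ S, ((1:ℝ) - if x i = y i then (1:ℝ) else 0) := by
        simp_rw [hd]; exact Finset.sum_congr rfl hswap
    _ = ∑ i : Fin n, ∑ x ∈ S, ∑ y ∈ S, ((1:ℝ) - if x i = y i then (1:ℝ) else 0) :=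
        Finset.sum_comm
    _ = ∑ i : Fin n, ((S.card : ℝ)^2 - ∑ j : Fin q, ((S.filter fun c => c i = j).card : ℝ)^2) := by
        refine Finset.sum_congr rfl fun i _ => ?_
        rw [← count_sq_sum S i]
        simp only [Finset.sum_sub_distrib, Finset.sum_const, nsmul_eq_mul, mul_one]
        ring

/-- Sum of squares lower bound with equality case. -/
lemma sum_sq_bound {q : ℕ} (hq : 0 < q) (f : Fin q → ℝ) (s : ℝ) (hf : ∑ j, f j = s) :
    s^2 / q ≤ ∑ j, (f j)^2 ∧ ((∑ j, (f j)^2) = s^2/q ↔ ∀ j, f j = s / q) := by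
  have hq0 : (q:ℝ) ≠ 0 := by positivity
  have key : ∑ j, (f j - s/q)^2 = (∑ j, (f j)^2) - s^2/q := by
    have he : ∀ j : Fin q, (f j - s/q)^2 = (f j)^2 - 2*(s/q)*f j + (s/q)^2 := fun j => by ring
    simp_rw [he]
    rw [Finset.sum_add_distrib, Finset.sum_sub_distrib, ← Finset.mul_sum, hf,
      Finset.sum_const, Finset.card_univ, Fintype.card_fin, nsmul_eq_mul]
    field_simp
    ring
  have hnn : (0:ℝ) ≤ ∑ j, (f j - s/q)^2 :=
    Finset.sum_nonneg fun j _ => sq_nonneg _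
  constructor
  · linarith [key, hnn]
  · constructor
    · intro h
      have hz : ∑ j, (f j - s/q)^2 = 0 := by rw [key, h]; ring
      intro j
      have := (Finset.sum_eq_zero_iff_of_nonneg (fun j _ => sq_nonneg (f j - s/q))).mp hz
        j (Finset.mem_univ j)
      have := sq_eq_zero_iff.mp this
      linarith
    · intro h
      simp_rw [h]
      rw [Finset.sum_const, Finset.card_univ, Fintype.card_fin, nsmul_eq_mul]
      field_simp

/-- Existence of a code of any size `M ≤ q^n` divisible by `q` with uniform symbol
frequencies. -/
lemma exists_uniform_code (q n : ℕ) (hq : 2 ≤ q) (hn : 1 ≤ n) (M : ℕ)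
    (hdvd : q ∣ M) (hle : M ≤ q ^ n) :
    ∃ S : Finset (Fin n → Fin q), S.card = M ∧
      ∀ (i : Fin n) (j : Fin q), (S.filter fun c => c i = j).card * q = M := by
  classical
  obtain ⟨n', rfl⟩ : ∃ n', n = n' + 1 := ⟨n - 1, by omega⟩
  obtain ⟨m, rfl⟩ := hdvd
  haveI : NeZero q := ⟨by omega⟩
  have hm : m ≤ q ^ n' := by
    have h1 : q * m ≤ q * q ^ n' := by rwa [pow_succ'] at hle
    exact Nat.le_of_mul_le_mul_left h1 (by omega)
  set w : Fin m → Fin n' → Fin q := fun a =>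
    finFunctionFinEquiv.symm (Fin.castLE hm a) with hw
  set F : Fin q × Fin m → (Fin (n' + 1) → Fin q) := fun p =>
    Fin.cons p.1 (fun i => w p.2 i + p.1) with hF
  have hFinj : Function.Injective F := by
    rintro ⟨b, a⟩ ⟨b', a'⟩ h
    have h0 : b = b' := by
      have := congrFun h 0
      simpa [hF] using this
    subst h0
    have h1 : ∀ i : Fin n', w a i = w a' i := by
      intro i
      have := congrFun h i.succ
      simp only [hF, Fin.cons_succ] at this
      exact add_right_cancel this
    have h2 : Fin.castLE hm a = Fin.castLE hm a' :=
      finFunctionFinEquiv.symm.injective (funext h1)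
    exact Prod.ext rfl (Fin.castLE_injective hm h2)
  refine ⟨Finset.image F Finset.univ, ?_, ?_⟩
  · rw [Finset.card_image_of_injective _ hFinj, Finset.card_univ, Fintype.card_prod,
      Fintype.card_fin, Fintype.card_fin]
  · intro i j
    rw [Finset.filter_image, Finset.card_image_of_injective _ hFinj]
    have key : (Finset.univ.filter fun p : Fin q × Fin m => F p i = j).card = m := by
      induction i using Fin.cases with
      | zero =>
          have : (Finset.univ.filter fun p : Fin q × Fin m => F p 0 = j) =
              {j} ×ˢ Finset.univ := by
            ext p
            simp only [hF, Finset.mem_filter, Finset.mem_univ, true_and, Fin.cons_zero,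
              Finset.mem_product, Finset.mem_singleton, and_true]
          rw [this, Finset.card_product]
          simp
      | succ i =>
          rw [Finset.card_filter, Fintype.sum_prod_type_right]
          have : ∀ b : Fin m, (∑ a : Fin q, if F (a, b) (Fin.succ i) = j then 1 else 0) = 1 := by
            intro b
            have hc : ∀ a : Fin q, (F (a, b) (Fin.succ i) = j) = (a = j - w b i) := by
              intro a
              simp only [hF, Fin.cons_succ]
              rw [eq_iff_iff]
              constructor
              · intro h; rw [← h]; abel
              · intro h; rw [h]; abel
            simp_rw [hc]
            simp
          rw [Finset.sum_congr rfl fun b _ => this b]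
          simp
    rw [key, Nat.mul_comm]

end aux

set_option maxHeartbeats 1000000 in
/-- **Characterization of MAD codes.** Let `C` be a `q`-ary code of
length `n` whose size `M = |C|` is a multiple of `q` with `M ≤ q^n`. Then `C` is an
`(n, q, M)`-MAD code (i.e., `D(C) ≥ D(C')` for every code `C' ⊆ (Fin q)ⁿ` with
`|C'| = M`) if and only if `x_{i,j} = 1/q` for every coordinate `i` and symbol `j`. -/
theorem mad_code_iff_uniform_freq (q n : ℕ) (hq : 2 ≤ q) (hn : 1 ≤ n)
    (C : Finset (Fin n → Fin q)) (hC : C.Nonempty)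
    (hdvd : q ∣ C.card) (hle : C.card ≤ q ^ n) :
    (∀ C' : Finset (Fin n → Fin q), C'.card = C.card →
        (1 / (C'.card : ℝ) ^ 2) * ∑ x ∈ C', ∑ y ∈ C', (hammingDist x y : ℝ) ≤
          (1 / (C.card : ℝ) ^ 2) * ∑ x ∈ C, ∑ y ∈ C, (hammingDist x y : ℝ)) ↔
      ∀ (i : Fin n) (j : Fin q),
        ((C.filter fun c => c i = j).card : ℝ) / (C.card : ℝ) = 1 / (q : ℝ) := by
  have hq0 : 0 < q := by omega
  have hM0 : 0 < C.card := hC.card_pos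
  have hMR : (0:ℝ) < (C.card : ℝ) := by exact_mod_cast hM0
  have hqR : (q:ℝ) ≠ 0 := by positivity
  have hcount_sum : ∀ (S : Finset (Fin n → Fin q)) (i : Fin n),
      ∑ j : Fin q, ((S.filter fun c => c i = j).card : ℝ) = (S.card : ℝ) := by
    intro S i
    norm_cast
    exact (Finset.card_eq_sum_card_fiberwise fun x _ => Finset.mem_univ (x i)).symm
  set B : ℝ := (C.card : ℝ)^2 - (C.card : ℝ)^2 / q with hB
  have hterm : ∀ (S : Finset (Fin n → Fin q)), S.card = C.card → ∀ i : Fin n,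
      (S.card : ℝ)^2 - (∑ j : Fin q, ((S.filter fun c => c i = j).card : ℝ)^2) ≤ B := by
    intro S hS i
    have h1 : ((S.card : ℝ))^2 / q ≤ ∑ j : Fin q, ((S.filter fun c => c i = j).card : ℝ)^2 :=
      (sum_sq_bound hq0 _ _ (hcount_sum S i)).1
    rw [hS] at h1 ⊢
    rw [hB]
    linarith
  have hbound : ∀ S : Finset (Fin n → Fin q), S.card = C.card →
      (∑ x ∈ S, ∑ y ∈ S, (hammingDist x y : ℝ)) ≤ ∑ _i : Fin n, B := by
    intro S hS
    rw [double_sum_hamming]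
    exact Finset.sum_le_sum fun i _ => hterm S hS i
  obtain ⟨S₀, hS₀card, hS₀cnt⟩ := exists_uniform_code q n hq hn C.card hdvd hle
  have hcnt₀ : ∀ (i : Fin n) (j : Fin q),
      ((S₀.filter fun c => c i = j).card : ℝ) = (C.card : ℝ) / q := by
    intro i j
    have h1 : ((S₀.filter fun c => c i = j).card : ℝ) * q = (C.card : ℝ) := by
      exact_mod_cast congrArg (Nat.cast : ℕ → ℝ) (hS₀cnt i j)
    field_simp
    linarith
  have hS₀sum : (∑ x ∈ S₀, ∑ y ∈ S₀, (hammingDist x y : ℝ)) = ∑ _i : Fin n, B := by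
    rw [double_sum_hamming]
    refine Finset.sum_congr rfl fun i _ => ?_
    rw [hS₀card]
    simp_rw [hcnt₀ i]
    rw [Finset.sum_const, Finset.card_univ, Fintype.card_fin, nsmul_eq_mul, hB]
    field_simp
  constructor
  · intro h
    have h1 := h S₀ hS₀card
    rw [hS₀card] at h1
    have hpos : (0:ℝ) < 1 / (C.card : ℝ)^2 := by positivity
    have h2 : (∑ x ∈ S₀, ∑ y ∈ S₀, (hammingDist x y : ℝ)) ≤
        ∑ x ∈ C, ∑ y ∈ C, (hammingDist x y : ℝ) := le_of_mul_le_mul_left h1 hpos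
    have hCsum : (∑ x ∈ C, ∑ y ∈ C, (hammingDist x y : ℝ)) = ∑ _i : Fin n, B :=
      le_antisymm (hbound C rfl) (hS₀sum ▸ h2)
    rw [double_sum_hamming] at hCsum
    have heq := (Finset.sum_eq_sum_iff_of_le fun i _ => hterm C rfl i).mp hCsum
    intro i j
    have h3 : (∑ j : Fin q, ((C.filter fun c => c i = j).card : ℝ)^2) =
        (C.card : ℝ)^2 / q := by
      have := heq i (Finset.mem_univ i)
      rw [hB] at this
      linarith
    have h4 : ((C.filter fun c => c i = j).card : ℝ) = (C.card : ℝ) / q := by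
      have h5 : (∑ j : Fin q, ((C.filter fun c => c i = j).card : ℝ)^2) = ((C.card : ℝ))^2/q ↔
          ∀ j : Fin q, ((C.filter fun c => c i = j).card : ℝ) = (C.card : ℝ) / q :=
        (sum_sq_bound hq0 _ _ (hcount_sum C i)).2
      exact h5.mp h3 j
    rw [h4]
    rw [div_div, mul_comm, ← div_div, div_self (ne_of_gt hMR)]
  · intro h C' hcard
    have hcntC : ∀ (i : Fin n) (j : Fin q),
        ((C.filter fun c => c i = j).card : ℝ) = (C.card : ℝ) / q := by
      intro i j
      have h1 := h i j
      field_simp at h1 ⊢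
      linarith
    have hCsum : (∑ x ∈ C, ∑ y ∈ C, (hammingDist x y : ℝ)) = ∑ _i : Fin n, B := by
      rw [double_sum_hamming]
      refine Finset.sum_congr rfl fun i _ => ?_
      simp_rw [hcntC i]
      rw [Finset.sum_const, Finset.card_univ, Fintype.card_fin, nsmul_eq_mul, hB]
      field_simp
    rw [hcard]
    have hle' := (hbound C' hcard).trans hCsum.ge
    exact mul_le_mul_of_nonneg_left hle' (by positivity)
end

section
/- Let M = k·q with 1 ≤ k ≤ q^{n−1}. For t ∈ {0, 1, …, M−1}, let (a_n, …, a_1) be the base-q digits of t (a_1 the least significant digit) and let c(t) ∈ (Fin q)^n be given by c(t)_i = (a_1 + a_2 + ⋯ + a_i) mod q. Then the (n,q,k)-OptCeRA code C = {c(t) : 0 ≤ t ≤ M−1} has exactly M distinct codewords, and for every coordinate i ∈ {1,…,n} and every symbol j ∈ Fin q, exactly k codewords of C have symbol j at coordinate i, i.e., |{t < M : c(t)_i = j}| = k. -/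
private lemma qkey (q s x : ℕ) (hq : 0 < q) : (x + q - s % q + s) % q = x % q := by
  have h1 : s % q ≤ s := Nat.mod_le _ _
  have h2 : s % q < q := Nat.mod_lt _ hq
  have h3 : s % q + q * (s / q) = s := Nat.mod_add_div _ _
  have h4 : x + q - s % q + s = x + q + q * (s / q) := by omega
  rw [h4, Nat.add_mul_mod_self_left, Nat.add_mod_right]

private lemma quniq (q s a : ℕ) (hq : 0 < q) (ha : a < q) :
    a = ((s + a) % q + q - s % q) % q := by
  have h2 : s % q < q := Nat.mod_lt _ hq
  have h5 : (s + a) % q + q - s % q = (s + a) % q + (q - s % q) := by omega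
  rw [h5, Nat.mod_add_mod]
  have h6 : s + a + (q - s % q) = a + q - s % q + s := by omega
  rw [h6, qkey q s a hq, Nat.mod_eq_of_lt ha]

private lemma digits_eq (q : ℕ) (hq : 2 ≤ q) :
    ∀ n t t', t < q ^ n → t' < q ^ n →
      (∀ l, l < n → t / q ^ l % q = t' / q ^ l % q) → t = t' := by
  intro n
  induction n with
  | zero => intro t t' ht ht' _; simp [pow_zero] at ht ht'; omega
  | succ n ih =>
    intro t t' ht ht' h
    have h0 := h 0 (by omega)
    simp only [pow_zero, Nat.div_one] at h0
    have hd : t / q = t' / q := by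
      apply ih
      · rw [Nat.div_lt_iff_lt_mul (by omega), ← pow_succ]; exact ht
      · rw [Nat.div_lt_iff_lt_mul (by omega), ← pow_succ]; exact ht'
      · intro l hl
        have := h (l + 1) (by omega)
        rwa [pow_succ', ← Nat.div_div_eq_div_mul, ← Nat.div_div_eq_div_mul] at this
    have e1 := Nat.div_add_mod t q
    have e2 := Nat.div_add_mod t' q
    have e3 : q * (t / q) = q * (t' / q) := by rw [hd]
    omega

private def Ssum (q i u : ℕ) : ℕ := ∑ l ∈ Finset.range i, u / q ^ l % q

private def rr (q i j u : ℕ) : ℕ := (j + q - Ssum q i u % q) % q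

private lemma rr_lt (q i j u : ℕ) (hq : 0 < q) : rr q i j u < q := Nat.mod_lt _ hq

private lemma csum' (q t i : ℕ) :
    (∑ l ∈ Finset.range (i + 1), t / q ^ l % q) % q
      = (t % q + Ssum q i (t / q)) % q := by
  have : (∑ l ∈ Finset.range (i + 1), t / q ^ l % q)
      = t % q + ∑ l ∈ Finset.range i, t / q / q ^ l % q := by
    rw [Finset.sum_range_succ']
    simp only [pow_zero, Nat.div_one]
    rw [add_comm]
    congr 1
    apply Finset.sum_congr rfl
    intro l _
    rw [pow_succ', ← Nat.div_div_eq_div_mul]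
  rw [this]; rfl

private lemma key2 (q i j : ℕ) (hq : 0 < q) (hj : j < q) (u : ℕ) :
    (rr q i j u + Ssum q i u) % q = j := by
  unfold rr
  rw [Nat.mod_add_mod, qkey q (Ssum q i u) j hq, Nat.mod_eq_of_lt hj]

private lemma rr_div (q i j u : ℕ) (hq : 0 < q) : (u * q + rr q i j u) / q = u := by
  rw [mul_comm u q, Nat.mul_add_div hq, Nat.div_eq_of_lt (rr_lt q i j u hq), add_zero]

private lemma rr_mod (q i j u : ℕ) (hq : 0 < q) : (u * q + rr q i j u) % q = rr q i j u := by
  rw [mul_comm u q, Nat.mul_add_mod, Nat.mod_eq_of_lt (rr_lt q i j u hq)]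

/-- Let `M = k·q` with `1 ≤ k ≤ q^(n-1)`. For `t ∈ {0,…,M-1}`, let
`(a_n,…,a_1)` be the base-`q` digits of `t` (`a_1` least significant, so the digit of
index `l`, `0 ≤ l < n`, is `t / q^l % q`) and let `c(t) ∈ (Fin q)ⁿ` be given by
`c(t)_i = (a_1 + ⋯ + a_i) mod q`. Then the `(n,q,k)`-OptCeRA code
`C = {c(t) : 0 ≤ t ≤ M-1}` has exactly `M` distinct codewords, and for every
coordinate `i` and every symbol `j ∈ Fin q`, exactly `k` codewords of `C` have
symbol `j` at coordinate `i`, i.e., `|{t < M : c(t)_i = j}| = k`. -/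
theorem optcera_code_card_and_uniform (q n k : ℕ) (hq : 2 ≤ q) (hn : 1 ≤ n)
    (hk : 1 ≤ k) (hkq : k ≤ q ^ (n - 1)) :
    letI M : ℕ := k * q
    letI c : ℕ → Fin n → Fin q := fun t i =>
      ⟨(∑ l ∈ Finset.range (i.1 + 1), (t / q ^ l % q)) % q, Nat.mod_lt _ (by omega)⟩
    ((Finset.range M).image c).card = M ∧
      ∀ (i : Fin n) (j : Fin q),
        ((Finset.range M).filter fun t => c t i = j).card = k := by
  have hq0 : 0 < q := by omega
  have hM : k * q ≤ q ^ n := by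
    calc k * q ≤ q ^ (n - 1) * q := Nat.mul_le_mul_right q hkq
    _ = q ^ n := by rw [← pow_succ]; congr 1; omega
  refine ⟨?_, ?_⟩
  · rw [Finset.card_image_of_injOn, Finset.card_range]
    intro t ht t' ht' hc
    simp only [Finset.mem_coe, Finset.mem_range] at ht ht'
    apply digits_eq q hq n t t' (lt_of_lt_of_le ht hM) (lt_of_lt_of_le ht' hM)
    intro l hl
    match l, hl with
    | 0, _ =>
      have h1 : (∑ x ∈ Finset.range (0 + 1), t / q ^ x % q) % q
          = (∑ x ∈ Finset.range (0 + 1), t' / q ^ x % q) % q :=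
        congrArg Fin.val (congrFun hc ⟨0, by omega⟩)
      simpa using h1
    | Nat.succ m, hl =>
      have h1 : (∑ x ∈ Finset.range (m + 1 + 1), t / q ^ x % q) % q
          = (∑ x ∈ Finset.range (m + 1 + 1), t' / q ^ x % q) % q :=
        congrArg Fin.val (congrFun hc ⟨m + 1, hl⟩)
      have h2 : (∑ x ∈ Finset.range (m + 1), t / q ^ x % q) % q
          = (∑ x ∈ Finset.range (m + 1), t' / q ^ x % q) % q :=
        congrArg Fin.val (congrFun hc ⟨m, by omega⟩)
      rw [quniq q (∑ x ∈ Finset.range (m + 1), t / q ^ x % q) (t / q ^ (m + 1) % q) hq0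
          (Nat.mod_lt _ hq0),
        quniq q (∑ x ∈ Finset.range (m + 1), t' / q ^ x % q) (t' / q ^ (m + 1) % q) hq0
          (Nat.mod_lt _ hq0), ← Finset.sum_range_succ, ← Finset.sum_range_succ, h1, h2]
  · intro i j
    refine ((Finset.card_bij (fun u _ => u * q + rr q i.1 j.1 u) ?_ ?_ ?_).symm.trans
      (Finset.card_range k))
    · intro u hu
      simp only [Finset.mem_range] at hu
      simp only [Finset.mem_filter, Finset.mem_range]
      constructor
      · have := rr_lt q i.1 j.1 u hq0
        calc u * q + rr q i.1 j.1 u < u * q + q := by omega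
        _ = (u + 1) * q := by ring
        _ ≤ k * q := Nat.mul_le_mul_right q (by omega)
      · apply Fin.ext
        show (∑ l ∈ Finset.range (i.1 + 1), (u * q + rr q i.1 j.1 u) / q ^ l % q) % q = j.1
        rw [csum', rr_mod q i.1 j.1 u hq0, rr_div q i.1 j.1 u hq0, key2 q i.1 j.1 hq0 j.2 u]
    · intro u hu u' hu' h
      have := congrArg (· / q) h
      simpa only [rr_div q i.1 j.1 u hq0, rr_div q i.1 j.1 u' hq0] using this
    · intro t ht
      simp only [Finset.mem_filter, Finset.mem_range] at ht
      obtain ⟨htM, htc⟩ := ht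
      refine ⟨t / q, Finset.mem_range.mpr ?_, ?_⟩
      · exact Nat.div_lt_of_lt_mul (by rw [mul_comm]; exact htM)
      · have h9 : (∑ l ∈ Finset.range (i.1 + 1), t / q ^ l % q) % q = j.1 :=
          congrArg Fin.val htc
        rw [csum' q t i.1] at h9
        have h7 := quniq q (Ssum q i.1 (t / q)) (t % q) hq0 (Nat.mod_lt _ hq0)
        rw [add_comm (Ssum q i.1 (t / q)) (t % q), h9] at h7
        have huniq : t % q = rr q i.1 j.1 (t / q) := h7
        show t / q * q + rr q i.1 j.1 (t / q) = t
        rw [← huniq]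
        exact Nat.div_add_mod' t q
end

section
/- Let C ⊆ (Fin r)^2 be a code of size M in which every symbol appears exactly k = M/r times at each of the two coordinates, and let K devices independently and uniformly at random each select a codeword from C. Fix a codeword c ∈ C. The probability that c is not an inferred valid codeword — i.e., the probability that either no device selects a codeword with first coordinate c_1 or no device selects a codeword with second coordinate c_2 — equals 2·(1 − k/M)^K − (1 − (2k−1)/M)^K. -/
lemma card_filter_subtype {α : Type*} [DecidableEq α] (s : Finset α) (p : α → Prop)
    [DecidablePred p] :
    (Finset.univ.filter fun x : {x // x ∈ s} => p x.val).card = (s.filter p).card := by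
  rw [Finset.univ_eq_attach, Finset.filter_attach]
  simp

lemma card_forall_subtype {α : Type*} [DecidableEq α] (s : Finset α) (K : ℕ) (p : α → Prop)
    [DecidablePred p] :
    (Finset.univ.filter fun ω : Fin K → {x // x ∈ s} => ∀ u, p (ω u).val).card
      = (s.filter p).card ^ K := by
  have h : (Finset.univ.filter fun ω : Fin K → {x // x ∈ s} => ∀ u, p (ω u).val)
      = Fintype.piFinset
          (fun _ : Fin K => Finset.univ.filter fun x : {x // x ∈ s} => p x.val) := by
    ext ω; simp [Fintype.mem_piFinset]
  rw [h, Fintype.card_piFinset, Finset.prod_const, card_filter_subtype s p,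
    Finset.card_univ, Fintype.card_fin]

/-- Let `C ⊆ (Fin r)²` be a code of size `M = k·r` in which every
symbol appears exactly `k` times at each of the two coordinates, and let `K` devices
independently and uniformly at random each select a codeword from `C` (uniform measure
on `ω : Fin K → C`). Fix a codeword `c ∈ C`. The probability that `c` is not an
inferred valid codeword — i.e., that either no device selects a codeword with first
coordinate `c_1` or no device selects a codeword with second coordinate `c_2` — equals
`2·(1 - k/M)^K - (1 - (2k-1)/M)^K`. -/
theorem prob_not_inferred_valid (r k K : ℕ) (hr : 2 ≤ r) (hK : 1 ≤ K)
    (C : Finset (Fin 2 → Fin r)) (hM : C.card = k * r)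
    (huniform : ∀ (i : Fin 2) (j : Fin r), (C.filter fun d => d i = j).card = k)
    (c : Fin 2 → Fin r) (hc : c ∈ C) :
    ((Finset.univ.filter fun ω : Fin K → {x // x ∈ C} =>
          (∀ u : Fin K, (ω u : Fin 2 → Fin r) 0 ≠ c 0) ∨
          (∀ u : Fin K, (ω u : Fin 2 → Fin r) 1 ≠ c 1)).card : ℝ) /
        (Fintype.card (Fin K → {x // x ∈ C}) : ℝ) =
      2 * (1 - (k : ℝ) / (C.card : ℝ)) ^ K -
        (1 - (2 * (k : ℝ) - 1) / (C.card : ℝ)) ^ K := by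
  classical
  -- k ≥ 1
  have hk1 : 1 ≤ k := by
    have h := huniform 0 (c 0)
    have hmem : c ∈ C.filter fun d => d 0 = c 0 := by simp [hc]
    have hpos := Finset.card_pos.mpr ⟨c, hmem⟩
    rw [h] at hpos
    exact hpos
  have hkM : k ≤ C.card := by rw [hM]; nlinarith
  have h2kM : 2 * k - 1 ≤ C.card := by
    rw [hM]
    have h2 : 2 * k ≤ k * r := by nlinarith
    exact le_trans (Nat.sub_le _ _) h2
  have hMpos : 0 < C.card := by
    rw [hM]; exact Nat.mul_pos (by omega) (by omega)
  -- counts within C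
  have hA : (C.filter fun d => d 0 ≠ c 0).card = C.card - k := by
    have h := Finset.card_filter_add_card_filter_not
      (s := C) (p := fun d => d 0 = c 0)
    rw [huniform 0 (c 0)] at h
    simp only [ne_eq] at h ⊢
    rw [eq_tsub_iff_add_eq_of_le hkM, Nat.add_comm]
    exact h
  have hB : (C.filter fun d => d 1 ≠ c 1).card = C.card - k := by
    have h := Finset.card_filter_add_card_filter_not
      (s := C) (p := fun d => d 1 = c 1)
    rw [huniform 1 (c 1)] at h
    simp only [ne_eq] at h ⊢
    rw [eq_tsub_iff_add_eq_of_le hkM, Nat.add_comm]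
    exact h
  have hsingle : (C.filter fun d => d 0 = c 0 ∧ d 1 = c 1) = {c} := by
    ext d
    simp only [Finset.mem_filter, Finset.mem_singleton]
    constructor
    · rintro ⟨hd, h0, h1⟩
      funext u; fin_cases u <;> assumption
    · rintro rfl; exact ⟨hc, rfl, rfl⟩
  have hAB : (C.filter fun d => d 0 ≠ c 0 ∧ d 1 ≠ c 1).card = C.card - (2 * k - 1) := by
    have hneg := Finset.card_filter_add_card_filter_not
      (s := C) (p := fun d => d 0 ≠ c 0 ∧ d 1 ≠ c 1)
    have hun : (C.filter fun d => ¬(d 0 ≠ c 0 ∧ d 1 ≠ c 1))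
        = (C.filter fun d => d 0 = c 0) ∪ (C.filter fun d => d 1 = c 1) := by
      ext d; simp only [Finset.mem_filter, Finset.mem_union]; tauto
    have hinter : (C.filter fun d => d 0 = c 0) ∩ (C.filter fun d => d 1 = c 1)
        = (C.filter fun d => d 0 = c 0 ∧ d 1 = c 1) := by
      ext d; simp only [Finset.mem_filter, Finset.mem_inter]; tauto
    have hcards := Finset.card_union_add_card_inter
      (C.filter fun d => d 0 = c 0) (C.filter fun d => d 1 = c 1)
    rw [hinter, hsingle, huniform 0 (c 0), huniform 1 (c 1), Finset.card_singleton] at hcards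
    rw [hun] at hneg
    have hU := Nat.eq_sub_of_add_eq (hcards.trans (two_mul k).symm)
    rw [eq_tsub_iff_add_eq_of_le h2kM, ← hU]
    exact hneg
  -- counts of function sets
  have hSAcard : (Finset.univ.filter fun ω : Fin K → {x // x ∈ C} =>
      ∀ u : Fin K, (ω u : Fin 2 → Fin r) 0 ≠ c 0).card = (C.card - k) ^ K := by
    have h := card_forall_subtype C K (fun d => d 0 ≠ c 0)
    simp only [ne_eq] at h hA ⊢
    rw [h, hA]
  have hSBcard : (Finset.univ.filter fun ω : Fin K → {x // x ∈ C} =>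
      ∀ u : Fin K, (ω u : Fin 2 → Fin r) 1 ≠ c 1).card = (C.card - k) ^ K := by
    have h := card_forall_subtype C K (fun d => d 1 ≠ c 1)
    simp only [ne_eq] at h hB ⊢
    rw [h, hB]
  have hSABcard : ((Finset.univ.filter fun ω : Fin K → {x // x ∈ C} =>
      ∀ u : Fin K, (ω u : Fin 2 → Fin r) 0 ≠ c 0) ∩
      (Finset.univ.filter fun ω : Fin K → {x // x ∈ C} =>
      ∀ u : Fin K, (ω u : Fin 2 → Fin r) 1 ≠ c 1)).card = (C.card - (2 * k - 1)) ^ K := by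
    have heq : ((Finset.univ.filter fun ω : Fin K → {x // x ∈ C} =>
        ∀ u : Fin K, (ω u : Fin 2 → Fin r) 0 ≠ c 0) ∩
        (Finset.univ.filter fun ω : Fin K → {x // x ∈ C} =>
        ∀ u : Fin K, (ω u : Fin 2 → Fin r) 1 ≠ c 1))
        = Finset.univ.filter fun ω : Fin K → {x // x ∈ C} =>
            ∀ u : Fin K, (ω u : Fin 2 → Fin r) 0 ≠ c 0 ∧ (ω u : Fin 2 → Fin r) 1 ≠ c 1 := by
      ext ω
      simp only [Finset.mem_inter, Finset.mem_filter, Finset.mem_univ, true_and]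
      rw [forall_and]
    have h := card_forall_subtype C K (fun d => d 0 ≠ c 0 ∧ d 1 ≠ c 1)
    simp only [ne_eq] at h hAB heq ⊢
    rw [heq, h, hAB]
  have hunion : (Finset.univ.filter fun ω : Fin K → {x // x ∈ C} =>
        (∀ u : Fin K, (ω u : Fin 2 → Fin r) 0 ≠ c 0) ∨
        (∀ u : Fin K, (ω u : Fin 2 → Fin r) 1 ≠ c 1))
      = (Finset.univ.filter fun ω : Fin K → {x // x ∈ C} =>
        ∀ u : Fin K, (ω u : Fin 2 → Fin r) 0 ≠ c 0) ∪
        (Finset.univ.filter fun ω : Fin K → {x // x ∈ C} =>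
        ∀ u : Fin K, (ω u : Fin 2 → Fin r) 1 ≠ c 1) := by
    ext ω
    simp only [Finset.mem_union, Finset.mem_filter, Finset.mem_univ, true_and]
  have hcardU := Finset.card_union_add_card_inter
    (Finset.univ.filter fun ω : Fin K → {x // x ∈ C} =>
      ∀ u : Fin K, (ω u : Fin 2 → Fin r) 0 ≠ c 0)
    (Finset.univ.filter fun ω : Fin K → {x // x ∈ C} =>
      ∀ u : Fin K, (ω u : Fin 2 → Fin r) 1 ≠ c 1)
  rw [hSAcard, hSBcard, hSABcard] at hcardU
  rw [hunion]
  -- cast everything to ℝ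
  have htot : (Fintype.card (Fin K → {x // x ∈ C}) : ℝ) = (C.card : ℝ) ^ K := by
    rw [Fintype.card_fun, Fintype.card_coe, Fintype.card_fin]
    push_cast
    ring
  have e1 : ((C.card - k : ℕ) : ℝ) = (C.card : ℝ) - k := by
    rw [Nat.cast_sub hkM]
  have e2 : ((C.card - (2 * k - 1) : ℕ) : ℝ) = (C.card : ℝ) - (2 * (k : ℝ) - 1) := by
    rw [Nat.cast_sub h2kM, Nat.cast_sub (show 1 ≤ 2 * k by nlinarith)]
    push_cast; ring
  have hUcast : ((((Finset.univ.filter fun ω : Fin K → {x // x ∈ C} =>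
        ∀ u : Fin K, (ω u : Fin 2 → Fin r) 0 ≠ c 0) ∪
        (Finset.univ.filter fun ω : Fin K → {x // x ∈ C} =>
        ∀ u : Fin K, (ω u : Fin 2 → Fin r) 1 ≠ c 1)).card : ℝ))
      = 2 * ((C.card : ℝ) - k) ^ K - ((C.card : ℝ) - (2 * (k : ℝ) - 1)) ^ K := by
    have hcast := congrArg (Nat.cast : ℕ → ℝ) hcardU
    push_cast at hcast
    rw [e1, e2] at hcast
    linarith
  rw [hUcast, htot]
  have hMne : (C.card : ℝ) ≠ 0 := Nat.cast_ne_zero.mpr hMpos.ne'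
  have hMKne : (C.card : ℝ) ^ K ≠ 0 := pow_ne_zero _ hMne
  have e3 : (1 - (k : ℝ) / (C.card : ℝ)) = ((C.card : ℝ) - k) / C.card := by field_simp
  have e4 : (1 - (2 * (k : ℝ) - 1) / (C.card : ℝ))
      = ((C.card : ℝ) - (2 * (k : ℝ) - 1)) / C.card := by field_simp
  rw [e3, e4, div_pow, div_pow]
  field_simp
end

section
/- (Expectation of the number of inferred valid codewords) Let C ⊆ (Fin r)^2 be a code of size M in which every symbol appears exactly k = M/r times at each of the two coordinates, and let K devices independently and uniformly at random each select a codeword from C. Let V(ω) be the number of inferred valid codewords, i.e., the number of c ∈ C such that some device's codeword agrees with c in coordinate 1 and some device's codeword agrees with c in coordinate 2. Then E[V] = M · (1 − [2·(1 − k/M)^K − (1 − (2k−1)/M)^K]). -/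
open Finset

lemma aux_pi_filter_card {α : Type*} [Fintype α] (K : ℕ) (p : α → Prop) [DecidablePred p] :
    (Finset.univ.filter fun ω : Fin K → α => ∀ u, p (ω u)).card
      = (Finset.univ.filter p).card ^ K := by
  rw [← Fintype.card_subtype, ← Fintype.card_subtype,
    Fintype.card_congr (Equiv.subtypePiEquivPi (p := fun _ x => p x)), Fintype.card_fun,
    Fintype.card_fin]

lemma aux_coe_filter_card {β : Type*} [DecidableEq β] (C : Finset β) (q : β → Prop)
    [DecidablePred q] :
    (Finset.univ.filter fun x : {x // x ∈ C} => q ↑x).card = (C.filter q).card := by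
  rw [← Fintype.card_subtype, ← Fintype.card_coe]
  apply Fintype.card_congr
  exact (Equiv.subtypeSubtypeEquivSubtypeInter _ _).trans
    (Equiv.subtypeEquivRight (by intro x; simp [Finset.mem_filter]))

lemma aux_key (r k K : ℕ) (C : Finset (Fin 2 → Fin r)) (hk : 1 ≤ k)
    (hM2 : k + k ≤ C.card + 1)
    (huniform : ∀ (i : Fin 2) (j : Fin r), (C.filter fun d => d i = j).card = k)
    (c : Fin 2 → Fin r) (hc : c ∈ C) :
    ((Finset.univ.filter fun ω : Fin K → {x // x ∈ C} =>
        (∃ u : Fin K, (ω u : Fin 2 → Fin r) 0 = c 0) ∧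
        (∃ u : Fin K, (ω u : Fin 2 → Fin r) 1 = c 1)).card : ℝ)
      = (C.card : ℝ) ^ K - 2 * ((C.card : ℝ) - k) ^ K
        + ((C.card : ℝ) + 1 - 2 * k) ^ K := by
  classical
  have hkM : k ≤ C.card := by
    have := (huniform 0 (c 0)) ▸ Finset.card_filter_le C (fun d => d 0 = c 0)
    omega
  -- counts on C
  have hA : ∀ i : Fin 2, (C.filter fun d => ¬ (d i = c i)).card + k = C.card := by
    intro i
    have h : (C.filter fun d => d i = c i).card
        + (C.filter fun d => ¬ (d i = c i)).card = C.card :=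
      Finset.card_filter_add_card_filter_not _
    rw [huniform i (c i)] at h
    linarith
  have hI : C.filter (fun d => d 0 = c 0 ∧ d 1 = c 1) = {c} := by
    ext d
    have hd : (d 0 = c 0 ∧ d 1 = c 1) ↔ d = c := by
      rw [funext_iff, Fin.forall_fin_two]
    simp only [Finset.mem_filter, Finset.mem_singleton, hd]
    exact ⟨fun h => h.2, fun h => ⟨h ▸ hc, h⟩⟩
  have hU : (C.filter fun d => d 0 = c 0 ∨ d 1 = c 1).card + 1 = k + k := by
    have h2 := Finset.card_union_add_card_inter (C.filter fun d => d 0 = c 0)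
      (C.filter fun d => d 1 = c 1)
    rw [← Finset.filter_or, ← Finset.filter_and, hI, huniform 0 (c 0), huniform 1 (c 1)] at h2
    simpa using h2
  have hB : (C.filter fun d => ¬ (d 0 = c 0) ∧ ¬ (d 1 = c 1)).card + (k + k) = C.card + 1 := by
    have h3 : (C.filter fun d => d 0 = c 0 ∨ d 1 = c 1).card
        + (C.filter fun d => ¬ (d 0 = c 0 ∨ d 1 = c 1)).card = C.card :=
      Finset.card_filter_add_card_filter_not _
    have h4 : (C.filter fun d => ¬ (d 0 = c 0 ∨ d 1 = c 1))
        = C.filter fun d => ¬ (d 0 = c 0) ∧ ¬ (d 1 = c 1) := by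
      apply Finset.filter_congr; intro d _; simp [not_or]
    rw [h4] at h3
    linarith
  -- counts on ω
  set T := {x // x ∈ C}
  have hcard0 : ∀ i : Fin 2, (Finset.univ.filter fun ω : Fin K → T =>
      ∀ u, ¬ ((ω u : Fin 2 → Fin r) i = c i)).card = (C.card - k) ^ K := by
    intro i
    rw [aux_pi_filter_card K (fun x : T => ¬ ((x : Fin 2 → Fin r) i = c i)),
      aux_coe_filter_card C (fun d => ¬ (d i = c i))]
    rw [Nat.eq_sub_of_add_eq (hA i)]
  have hcard01 : (Finset.univ.filter fun ω : Fin K → T =>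
      ∀ u, ¬ ((ω u : Fin 2 → Fin r) 0 = c 0) ∧ ¬ ((ω u : Fin 2 → Fin r) 1 = c 1)).card
      = (C.card + 1 - (k + k)) ^ K := by
    rw [aux_pi_filter_card K
      (fun x : T => ¬ ((x : Fin 2 → Fin r) 0 = c 0) ∧ ¬ ((x : Fin 2 → Fin r) 1 = c 1)),
      aux_coe_filter_card C (fun d => ¬ (d 0 = c 0) ∧ ¬ (d 1 = c 1))]
    rw [Nat.eq_sub_of_add_eq hB]
  -- inclusion exclusion
  set P : (Fin K → T) → Prop := fun ω => ∃ u, (ω u : Fin 2 → Fin r) 0 = c 0 with hP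
  set Q : (Fin K → T) → Prop := fun ω => ∃ u, (ω u : Fin 2 → Fin r) 1 = c 1 with hQ
  have e1 : (Finset.univ.filter fun ω : Fin K → T => P ω ∧ Q ω).card
      + (Finset.univ.filter fun ω : Fin K → T => ¬ P ω ∨ ¬ Q ω).card = C.card ^ K := by
    have h5 : (Finset.univ.filter fun ω : Fin K → T => P ω ∧ Q ω).card
        + (Finset.univ.filter fun ω : Fin K → T => ¬ (P ω ∧ Q ω)).card
        = (Finset.univ : Finset (Fin K → T)).card :=
      Finset.card_filter_add_card_filter_not _
    have h6 : (Finset.univ.filter fun ω : Fin K → T => ¬ (P ω ∧ Q ω))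
        = Finset.univ.filter fun ω : Fin K → T => ¬ P ω ∨ ¬ Q ω := by
      apply Finset.filter_congr; intro d _
      constructor
      · intro h; by_cases hp : P d
        · exact Or.inr (fun hq => h ⟨hp, hq⟩)
        · exact Or.inl hp
      · rintro (h | h) ⟨h1, h2⟩ <;> [exact h h1; exact h h2]
    rw [h6] at h5
    rw [h5, Finset.card_univ, Fintype.card_fun, Fintype.card_coe, Fintype.card_fin]
  have e2 : (Finset.univ.filter fun ω : Fin K → T => ¬ P ω ∨ ¬ Q ω).card
      + (C.card + 1 - (k + k)) ^ K
      = (C.card - k) ^ K + (C.card - k) ^ K := by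
    have h7 := Finset.card_union_add_card_inter
      (Finset.univ.filter fun ω : Fin K → T => ¬ P ω)
      (Finset.univ.filter fun ω : Fin K → T => ¬ Q ω)
    rw [← Finset.filter_or, ← Finset.filter_and] at h7
    have hnp : (Finset.univ.filter fun ω : Fin K → T => ¬ P ω).card = (C.card - k) ^ K := by
      have h8 : (Finset.univ.filter fun ω : Fin K → T => ¬ P ω)
          = Finset.univ.filter fun ω : Fin K → T =>
              ∀ u, ¬ ((ω u : Fin 2 → Fin r) 0 = c 0) := by
        apply Finset.filter_congr; intro d _; simp [hP, not_exists]
      rw [h8, hcard0 0]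
    have hnq : (Finset.univ.filter fun ω : Fin K → T => ¬ Q ω).card = (C.card - k) ^ K := by
      have h8 : (Finset.univ.filter fun ω : Fin K → T => ¬ Q ω)
          = Finset.univ.filter fun ω : Fin K → T =>
              ∀ u, ¬ ((ω u : Fin 2 → Fin r) 1 = c 1) := by
        apply Finset.filter_congr; intro d _; simp [hQ, not_exists]
      rw [h8, hcard0 1]
    have h9 : (Finset.univ.filter fun ω : Fin K → T => ¬ P ω ∧ ¬ Q ω)
        = Finset.univ.filter fun ω : Fin K → T =>
            ∀ u, ¬ ((ω u : Fin 2 → Fin r) 0 = c 0) ∧ ¬ ((ω u : Fin 2 → Fin r) 1 = c 1) := by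
      apply Finset.filter_congr; intro d _
      simp only [hP, hQ, not_exists]
      constructor
      · rintro ⟨h1, h2⟩ u; exact ⟨h1 u, h2 u⟩
      · intro h; exact ⟨fun u => (h u).1, fun u => (h u).2⟩
    rw [hnp, hnq, h9, hcard01] at h7
    exact h7
  -- combine in ℝ
  have hcast1 : ((C.card - k : ℕ) : ℝ) = (C.card : ℝ) - k := by
    push_cast [hkM]; ring
  have hcast2 : ((C.card + 1 - (k + k) : ℕ) : ℝ) = (C.card : ℝ) + 1 - 2 * k := by
    push_cast [hM2]; ring
  have r1 := congrArg (Nat.cast : ℕ → ℝ) e1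
  have r2 := congrArg (Nat.cast : ℕ → ℝ) e2
  push_cast [hcast1, hcast2] at r1 r2
  linarith

/-- **Expectation of the number of inferred valid codewords.** Let
`C ⊆ (Fin r)²` be a code of size `M = k·r` in which every symbol appears exactly `k`
times at each of the two coordinates, and let `K` devices independently and uniformly
at random each select a codeword from `C` (uniform measure on `ω : Fin K → C`). Let
`V(ω)` be the number of inferred valid codewords, i.e., the number of `c ∈ C` such that
some device's codeword agrees with `c` in coordinate 1 and some device's codeword
agrees with `c` in coordinate 2. Then
`E[V] = M · (1 - [2·(1 - k/M)^K - (1 - (2k-1)/M)^K])`. -/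
theorem expectation_inferred_valid_codewords (r k K : ℕ) (hr : 2 ≤ r) (hK : 1 ≤ K)
    (C : Finset (Fin 2 → Fin r)) (hM : C.card = k * r)
    (huniform : ∀ (i : Fin 2) (j : Fin r), (C.filter fun d => d i = j).card = k) :
    (∑ ω : Fin K → {x // x ∈ C},
        ((C.filter fun c =>
          (∃ u : Fin K, (ω u : Fin 2 → Fin r) 0 = c 0) ∧
          (∃ u : Fin K, (ω u : Fin 2 → Fin r) 1 = c 1)).card : ℝ)) /
        (Fintype.card (Fin K → {x // x ∈ C}) : ℝ) =
      (C.card : ℝ) * (1 - (2 * (1 - (k : ℝ) / (C.card : ℝ)) ^ K -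
        (1 - (2 * (k : ℝ) - 1) / (C.card : ℝ)) ^ K)) := by
  classical
  rcases Nat.eq_zero_or_pos C.card with hC0 | hCpos
  · have hCe : C = ∅ := Finset.card_eq_zero.mp hC0
    subst hCe
    simp
  -- k ≥ 1 and bounds
  have hk0 : k ≠ 0 := by
    intro h; rw [h, zero_mul] at hM; omega
  have hk1 : 1 ≤ k := Nat.one_le_iff_ne_zero.mpr hk0
  have hM2 : k + k ≤ C.card + 1 := by
    have h2 : k * 2 ≤ k * r := Nat.mul_le_mul_left k hr
    omega
  -- swap sums
  have hswap : (∑ ω : Fin K → {x // x ∈ C},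
        ((C.filter fun c =>
          (∃ u : Fin K, (ω u : Fin 2 → Fin r) 0 = c 0) ∧
          (∃ u : Fin K, (ω u : Fin 2 → Fin r) 1 = c 1)).card : ℝ))
      = ∑ c ∈ C, ((Finset.univ.filter fun ω : Fin K → {x // x ∈ C} =>
          (∃ u : Fin K, (ω u : Fin 2 → Fin r) 0 = c 0) ∧
          (∃ u : Fin K, (ω u : Fin 2 → Fin r) 1 = c 1)).card : ℝ) := by
    simp_rw [← Finset.sum_boole]
    rw [Finset.sum_comm]
  rw [hswap]
  have hkey := aux_key r k K C hk1 hM2 huniform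
  rw [Finset.sum_congr rfl (fun c hc => hkey c hc), Finset.sum_const, nsmul_eq_mul]
  -- arithmetic
  have hMne : (C.card : ℝ) ≠ 0 := Nat.cast_ne_zero.mpr (by omega)
  rw [Fintype.card_fun, Fintype.card_coe, Fintype.card_fin]
  have h1 : (1 - (k : ℝ) / (C.card : ℝ)) = ((C.card : ℝ) - k) / (C.card : ℝ) := by
    field_simp
  have h2 : (1 - (2 * (k : ℝ) - 1) / (C.card : ℝ))
      = ((C.card : ℝ) + 1 - 2 * k) / (C.card : ℝ) := by
    field_simp; ring
  rw [h1, h2, div_pow, div_pow]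
  push_cast
  have hMKne : ((C.card : ℝ)) ^ K ≠ 0 := pow_ne_zero K hMne
  field_simp
  ring
end
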